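/- Every traceless SU(2) representation of the group ⟨a, b, c, d | a c⁻¹ = b d⁻¹⟩ is conjugate to one of the form a ↦ i, b ↦ e^{γk} i, c ↦ e^{θk} i, d ↦ e^{(γ+θ)k} i for some γ, θ ∈ ℝ; moreover the parameters (γ, θ) and (γ', θ') give conjugate representations if and only if (γ', θ') = (γ + 2mπ, θ + 2nπ) for integers m, n, or (γ', θ') = (-γ + 2mπ, -θ + 2nπ). -/

import Mathlib

open Real

noncomputable section

def qi : Quaternion ℝ := ⟨0, 1, 0, 0⟩

/-- `e^{γk} i = cos γ · i + sin γ · j`. -/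
def ekx (γ : ℝ) : Quaternion ℝ := ⟨0, Real.cos γ, Real.sin γ, 0⟩

namespace Stmt6Aux

def wq (x y : ℝ) : Quaternion ℝ := ⟨x,y,0,0⟩

open scoped Quaternion

@[simp] lemma qi_re' : qi.re = 0 := rfl
@[simp] lemma qi_imI' : qi.imI = 1 := rfl
@[simp] lemma qi_imJ' : qi.imJ = 0 := rfl
@[simp] lemma qi_imK' : qi.imK = 0 := rfl
@[simp] lemma ekx_re' (γ : ℝ) : (ekx γ).re = 0 := rfl
@[simp] lemma ekx_imI' (γ : ℝ) : (ekx γ).imI = Real.cos γ := rfl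
@[simp] lemma ekx_imJ' (γ : ℝ) : (ekx γ).imJ = Real.sin γ := rfl
@[simp] lemma ekx_imK' (γ : ℝ) : (ekx γ).imK = 0 := rfl
@[simp] lemma wq_re' (x y : ℝ) : (wq x y).re = x := rfl
@[simp] lemma wq_imI' (x y : ℝ) : (wq x y).imI = y := rfl
@[simp] lemma wq_imJ' (x y : ℝ) : (wq x y).imJ = 0 := rfl
@[simp] lemma wq_imK' (x y : ℝ) : (wq x y).imK = 0 := rfl

lemma circle_param (p q : ℝ) (h : p^2 + q^2 = 1) : ∃ γ, Real.cos γ = p ∧ Real.sin γ = q := by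
  rcases le_or_gt 0 q with hq | hq
  · refine ⟨Real.arccos p, Real.cos_arccos (by nlinarith) (by nlinarith), ?_⟩
    rw [Real.sin_arccos, show 1 - p^2 = q^2 by linarith, Real.sqrt_sq hq]
  · refine ⟨-Real.arccos p, by rw [Real.cos_neg]; exact Real.cos_arccos (by nlinarith) (by nlinarith), ?_⟩
    rw [Real.sin_neg, Real.sin_arccos, show 1 - p^2 = q^2 by linarith, Real.sqrt_sq_eq_abs,
      abs_of_neg hq, neg_neg]

lemma normSq_of_norm_one {w : Quaternion ℝ} (h : ‖w‖ = 1) :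
    w.re^2 + w.imI^2 + w.imJ^2 + w.imK^2 = 1 := by
  have := Quaternion.normSq_eq_norm_mul_self w
  rw [h, mul_one] at this
  rw [← Quaternion.normSq_def', this]

lemma norm_one_of_normSq {w : Quaternion ℝ} (h : w.re^2 + w.imI^2 + w.imJ^2 + w.imK^2 = 1) :
    ‖w‖ = 1 := by
  have h2 := Quaternion.normSq_eq_norm_mul_self w
  rw [Quaternion.normSq_def', h] at h2
  nlinarith [norm_nonneg w]

lemma qi_norm : ‖qi‖ = 1 := by
  apply norm_one_of_normSq; simp [qi]

lemma ekx_norm (γ : ℝ) : ‖ekx γ‖ = 1 := by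
  apply norm_one_of_normSq
  show (0:ℝ)^2 + (Real.cos γ)^2 + (Real.sin γ)^2 + (0:ℝ)^2 = 1
  nlinarith [Real.sin_sq_add_cos_sq γ]

lemma ekx_re (γ : ℝ) : (ekx γ).re = 0 := rfl

lemma inv_of_unit {w : Quaternion ℝ} (h : ‖w‖ = 1) : w⁻¹ = star w := by
  refine inv_eq_of_mul_eq_one_right ?_
  have h2 := Quaternion.normSq_eq_norm_mul_self w
  rw [h, mul_one] at h2
  rw [Quaternion.self_mul_star, h2]; simp

lemma mul_re_comm (p q : Quaternion ℝ) : (p*q).re = (q*p).re := by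
  simp [Quaternion.re_mul]; ring

lemma re_conj {w : Quaternion ℝ} (hw : ‖w‖ = 1) (x : Quaternion ℝ) :
    (w * x * w⁻¹).re = x.re := by
  rw [inv_of_unit hw, mul_re_comm, ← mul_assoc]
  have h2 := Quaternion.normSq_eq_norm_mul_self w
  rw [hw, mul_one] at h2
  rw [Quaternion.star_mul_self, h2]
  simp

lemma sq_imag {a : Quaternion ℝ} (ha : a.re = 0) (hn : ‖a‖ = 1) : a * a = -1 := by
  have h2 := Quaternion.normSq_eq_norm_mul_self a
  rw [hn, mul_one, Quaternion.normSq_def', ha] at h2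
  ext <;> simp [Quaternion.re_mul, Quaternion.imI_mul, Quaternion.imJ_mul, Quaternion.imK_mul, ha]
    <;> nlinarith [h2]

lemma inv_imag {a : Quaternion ℝ} (ha : a.re = 0) (hn : ‖a‖ = 1) : a⁻¹ = -a := by
  refine inv_eq_of_mul_eq_one_right ?_
  rw [mul_neg, sq_imag ha hn, neg_neg]

lemma unit_ne_zero {w : Quaternion ℝ} (hw : ‖w‖ = 1) : w ≠ 0 := by
  intro h; rw [h] at hw; simp at hw

lemma conj_iff {w : Quaternion ℝ} (hw : ‖w‖ = 1) (x y : Quaternion ℝ) :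
    w * x * w⁻¹ = y ↔ w * x = y * w :=
  mul_inv_eq_iff_eq_mul₀ (unit_ne_zero hw)

lemma stage1 {a : Quaternion ℝ} (ha : a.re = 0) (hn : ‖a‖ = 1) :
    ∃ w : Quaternion ℝ, ‖w‖ = 1 ∧ w * a = qi * w := by
  by_cases h : (1 : Quaternion ℝ) - qi * a = 0
  · have ha' : a = -qi := by
      have h1 : qi * a = 1 := by rwa [sub_eq_zero, eq_comm] at h
      have h2 : qi * a * a = a := by rw [h1, one_mul]
      rw [mul_assoc, sq_imag ha hn] at h2
      simp at h2
      exact h2.symm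
    refine ⟨ekx (π/2), ?_, ?_⟩
    · apply norm_one_of_normSq; simp
    · subst ha'
      ext <;> simp [Quaternion.re_mul, Quaternion.imI_mul, Quaternion.imJ_mul, Quaternion.imK_mul]
  · set u : Quaternion ℝ := 1 - qi * a with hu
    have key : u * a = qi * u := by
      rw [hu, sub_mul, mul_sub, one_mul, mul_one, mul_assoc, sq_imag ha hn]
      have hq : qi * qi = -1 := by
        ext <;> simp [Quaternion.re_mul, Quaternion.imI_mul, Quaternion.imJ_mul, Quaternion.imK_mul]
      rw [← mul_assoc, hq]
      noncomm_ring
    refine ⟨(‖u‖⁻¹ : ℝ) • u, ?_, ?_⟩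
    · rw [norm_smul]
      simp [norm_ne_zero_iff.mpr h]
    · rw [smul_mul_assoc, key, mul_smul_comm]

lemma choose_pq (b2 b3 c2 c3 : ℝ) (h : b2*c3 - b3*c2 = 0) :
    ∃ p q : ℝ, p^2+q^2=1 ∧ q*b2+p*b3 = 0 ∧ q*c2+p*c3 = 0 := by
  by_cases hb : b2 = 0 ∧ b3 = 0
  · by_cases hc : c2 = 0 ∧ c3 = 0
    · exact ⟨1, 0, by norm_num, by simp [hb.1, hb.2], by simp [hc.1, hc.2]⟩
    · have hs : c2^2 + c3^2 > 0 := by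
        rcases (not_and_or.mp hc) with h2 | h3
        · positivity
        · positivity
      set s := Real.sqrt (c2^2 + c3^2) with hsd
      have hs2 : s^2 = c2^2 + c3^2 := Real.sq_sqrt (le_of_lt hs)
      have hsne : s ≠ 0 := by positivity
      refine ⟨c2/s, -c3/s, by field_simp; linarith, by simp [hb.1, hb.2], by field_simp; ring⟩
  · have hs : b2^2 + b3^2 > 0 := by
      rcases (not_and_or.mp hb) with h2 | h3
      · positivity
      · positivity
    set s := Real.sqrt (b2^2 + b3^2) with hsd
    have hs2 : s^2 = b2^2 + b3^2 := Real.sq_sqrt (le_of_lt hs)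
    have hsne : s ≠ 0 := by positivity
    refine ⟨b2/s, -b3/s, by field_simp; linarith, by field_simp; ring, ?_⟩
    field_simp
    linear_combination h

lemma stage2core (b : Quaternion ℝ) (x y : ℝ) (hx : x^2+y^2 = 1)
    (hb : b.re = 0) (hbn : ‖b‖ = 1)
    (h0 : (2*x*y)*b.imJ + (x^2-y^2)*b.imK = 0) :
    ∃ γ, wq x y * b = ekx γ * wq x y := by
  have hbn' := normSq_of_norm_one hbn
  rw [hb] at hbn'
  obtain ⟨γ, hc, hs⟩ := circle_param b.imI ((x^2-y^2)*b.imJ - (2*x*y)*b.imK)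
    (by linear_combination hbn' + ((x^2+y^2+1)*(b.imJ^2+b.imK^2)) * hx
      - (2*x*y*b.imJ+(x^2-y^2)*b.imK) * h0)
  refine ⟨γ, ?_⟩
  ext <;>
    simp [Quaternion.re_mul, Quaternion.imI_mul, Quaternion.imJ_mul, Quaternion.imK_mul,
      hb, hc, hs]
  · ring
  · ring
  · linear_combination y*h0 - (x*b.imJ - y*b.imK)*hx
  · linear_combination x*h0 - (x*b.imK + y*b.imJ)*hx

lemma stage2 (b c : Quaternion ℝ) (hb : b.re = 0) (hc : c.re = 0)
    (hbn : ‖b‖ = 1) (hcn : ‖c‖ = 1) (hcop : (b * qi * c).re = 0) :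
    ∃ (w : Quaternion ℝ) (γ θ : ℝ), ‖w‖ = 1 ∧ w * qi = qi * w ∧
      w * b = ekx γ * w ∧ w * c = ekx θ * w := by
  have hcop' : b.imJ * c.imK - b.imK * c.imJ = 0 := by
    simp [Quaternion.re_mul, Quaternion.imI_mul, Quaternion.imJ_mul, Quaternion.imK_mul,
      hb, hc] at hcop
    linarith
  obtain ⟨p, q, hpq, h0b, h0c⟩ := choose_pq b.imJ b.imK c.imJ c.imK hcop'
  obtain ⟨φ, hcp, hsp⟩ := circle_param p q hpq
  set x := Real.cos (φ/2) with hxd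
  set y := Real.sin (φ/2) with hyd
  have hx : x^2 + y^2 = 1 := by
    rw [hxd, hyd, add_comm]; exact Real.sin_sq_add_cos_sq _
  have hp : x^2 - y^2 = p := by
    rw [← hcp, show φ = 2*(φ/2) by ring, Real.cos_two_mul]
    rw [hxd]; nlinarith [hx]
  have hq : 2*x*y = q := by
    rw [← hsp, show φ = 2*(φ/2) by ring, Real.sin_two_mul, hxd, hyd]; ring
  obtain ⟨γ, hγ⟩ := stage2core b x y hx hb hbn (by rw [hq, hp]; exact h0b)
  obtain ⟨θ, hθ⟩ := stage2core c x y hx hc hcn (by rw [hq, hp]; exact h0c)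
  refine ⟨wq x y, γ, θ, ?_, ?_, hγ, hθ⟩
  · apply norm_one_of_normSq; simp [wq]; exact hx
  · ext <;> simp [Quaternion.re_mul, Quaternion.imI_mul, Quaternion.imJ_mul,
      Quaternion.imK_mul] <;> ring

lemma ekx_mul_qi_mul (γ θ : ℝ) : ekx γ * qi * ekx θ = -ekx (γ + θ) := by
  ext <;>
    simp [Quaternion.re_mul, Quaternion.imI_mul, Quaternion.imJ_mul, Quaternion.imK_mul,
      Real.cos_add, Real.sin_add] <;> ring

lemma ekx_period (γ : ℝ) (m : ℤ) : ekx (γ + 2*m*π) = ekx γ := by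
  have h : γ + 2*(m:ℝ)*π = γ + (m:ℝ)*(2*π) := by ring
  rw [ekx, ekx, h, Real.cos_add_int_mul_two_pi, Real.sin_add_int_mul_two_pi]

end Stmt6Aux

namespace Stmt6Aux

lemma angle_eq {A B : ℝ} (hc : Real.cos A = Real.cos B) (hs : Real.sin A = Real.sin B) :
    ∃ m : ℤ, B = A + 2*m*π := by
  have h1 : Real.cos (B - A) = 1 := by
    rw [Real.cos_sub, ← hc, ← hs]
    nlinarith [Real.sin_sq_add_cos_sq A]
  obtain ⟨n, hn⟩ := (Real.cos_eq_one_iff _).mp h1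
  exact ⟨n, by linear_combination -hn⟩

lemma angle_neg_eq {A B : ℝ} (hc : Real.cos A = Real.cos B) (hs : Real.sin B = -Real.sin A) :
    ∃ m : ℤ, B = -A + 2*m*π := by
  have h1 : Real.cos (B + A) = 1 := by
    rw [Real.cos_add, ← hc, hs]
    nlinarith [Real.sin_sq_add_cos_sq A]
  obtain ⟨n, hn⟩ := (Real.cos_eq_one_iff _).mp h1
  exact ⟨n, by linear_combination -hn⟩

lemma qi_conj_ekx (A : ℝ) : qi * ekx A * qi⁻¹ = ekx (-A) := by
  rw [conj_iff qi_norm]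
  ext <;> simp [Quaternion.re_mul, Quaternion.imI_mul, Quaternion.imJ_mul,
    Quaternion.imK_mul]

end Stmt6Aux


open Stmt6Aux in
/-- Every traceless SU(2) representation of `⟨a,b,c,d | a c⁻¹ = b d⁻¹⟩` is conjugate to
the standard form `a ↦ i, b ↦ e^{γk}i, c ↦ e^{θk}i, d ↦ e^{(γ+θ)k}i`; and the standard
forms for `(γ,θ)` and `(γ',θ')` are conjugate iff `(γ',θ') = (γ+2mπ, θ+2nπ)` or
`(γ',θ') = (-γ+2mπ, -θ+2nπ)` for integers `m, n`. -/
theorem stmt6 :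
    (∀ a b c d : Quaternion ℝ, a.re = 0 → b.re = 0 → c.re = 0 → d.re = 0 →
      ‖a‖ = 1 → ‖b‖ = 1 → ‖c‖ = 1 → ‖d‖ = 1 → a * c⁻¹ = b * d⁻¹ →
      ∃ w : Quaternion ℝ, ‖w‖ = 1 ∧ ∃ γ θ : ℝ,
        w * a * w⁻¹ = qi ∧ w * b * w⁻¹ = ekx γ ∧ w * c * w⁻¹ = ekx θ ∧
        w * d * w⁻¹ = ekx (γ + θ)) ∧
    (∀ γ θ γ' θ' : ℝ,
      (∃ w : Quaternion ℝ, ‖w‖ = 1 ∧ w * qi * w⁻¹ = qi ∧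
          w * ekx γ * w⁻¹ = ekx γ' ∧ w * ekx θ * w⁻¹ = ekx θ' ∧
          w * ekx (γ + θ) * w⁻¹ = ekx (γ' + θ')) ↔
      (∃ m n : ℤ, (γ' = γ + 2 * m * π ∧ θ' = θ + 2 * n * π) ∨
        (γ' = -γ + 2 * m * π ∧ θ' = -θ + 2 * n * π))) := by
  constructor
  · intro a b c d ha hb hc hd han hbn hcn hdn hrel
    have hac : a * c = b * d := by
      rw [inv_imag hc hcn, inv_imag hd hdn, mul_neg, mul_neg, neg_inj] at hrel; exact hrel
    have hd' : d = -(b * (a * c)) := by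
      have h2 : b * (b * d) = b * (a * c) := by rw [hac]
      rw [← mul_assoc, sq_imag hb hbn, neg_one_mul] at h2
      rw [← h2, neg_neg]
    obtain ⟨w1, hw1n, hw1a⟩ := stage1 ha han
    have hw1ne := unit_ne_zero hw1n
    set b' := w1 * b * w1⁻¹ with hb'd
    set c' := w1 * c * w1⁻¹ with hc'd
    have hb'c : w1 * b = b' * w1 := (conj_iff hw1n _ _).mp rfl
    have hc'c : w1 * c = c' * w1 := (conj_iff hw1n _ _).mp rfl
    have hb're : b'.re = 0 := by rw [hb'd, re_conj hw1n, hb]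
    have hc're : c'.re = 0 := by rw [hc'd, re_conj hw1n, hc]
    have hb'n : ‖b'‖ = 1 := by rw [hb'd, norm_mul, norm_mul, norm_inv, hw1n, hbn]; norm_num
    have hc'n : ‖c'‖ = 1 := by rw [hc'd, norm_mul, norm_mul, norm_inv, hw1n, hcn]; norm_num
    have hcop : (b' * qi * c').re = 0 := by
      have hstep : (b' * qi) * c' * w1 = w1 * (b * (a * c)) :=
        calc (b' * qi) * c' * w1 = (b' * qi) * (c' * w1) := by noncomm_ring
          _ = (b' * qi) * (w1 * c) := by rw [← hc'c]
          _ = b' * (qi * w1) * c := by noncomm_ring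
          _ = b' * (w1 * a) * c := by rw [← hw1a]
          _ = (b' * w1) * (a * c) := by noncomm_ring
          _ = (w1 * b) * (a * c) := by rw [← hb'c]
          _ = w1 * (b * (a * c)) := by noncomm_ring
      have heq : b' * qi * c' = w1 * (b * (a * c)) * w1⁻¹ := by
        rw [← hstep, mul_assoc _ w1 w1⁻¹, mul_inv_cancel₀ hw1ne, mul_one]
      rw [heq, re_conj hw1n]
      have hbac : b * (a * c) = -d := by rw [hd', neg_neg]
      rw [hbac]
      simp [hd]
    obtain ⟨w2, γ, θ, hw2n, hw2qi, hw2b, hw2c⟩ := stage2 b' c' hb're hc're hb'n hc'n hcop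
    have hwn : ‖w2 * w1‖ = 1 := by rw [norm_mul, hw2n, hw1n, one_mul]
    refine ⟨w2 * w1, hwn, γ, θ, ?_, ?_, ?_, ?_⟩
    · rw [conj_iff hwn]
      calc (w2 * w1) * a = w2 * (w1 * a) := by noncomm_ring
        _ = w2 * (qi * w1) := by rw [hw1a]
        _ = (w2 * qi) * w1 := by noncomm_ring
        _ = (qi * w2) * w1 := by rw [hw2qi]
        _ = qi * (w2 * w1) := by noncomm_ring
    · rw [conj_iff hwn]
      calc (w2 * w1) * b = w2 * (w1 * b) := by noncomm_ring
        _ = w2 * (b' * w1) := by rw [hb'c]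
        _ = (w2 * b') * w1 := by noncomm_ring
        _ = (ekx γ * w2) * w1 := by rw [hw2b]
        _ = ekx γ * (w2 * w1) := by noncomm_ring
    · rw [conj_iff hwn]
      calc (w2 * w1) * c = w2 * (w1 * c) := by noncomm_ring
        _ = w2 * (c' * w1) := by rw [hc'c]
        _ = (w2 * c') * w1 := by noncomm_ring
        _ = (ekx θ * w2) * w1 := by rw [hw2c]
        _ = ekx θ * (w2 * w1) := by noncomm_ring
    · rw [conj_iff hwn, hd']
      have key : (w2 * w1) * (b * (a * c)) = -ekx (γ + θ) * (w2 * w1) :=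
        calc (w2 * w1) * (b * (a * c)) = w2 * (w1 * b) * (a * c) := by noncomm_ring
          _ = w2 * (b' * w1) * (a * c) := by rw [hb'c]
          _ = (w2 * b') * ((w1 * a) * c) := by noncomm_ring
          _ = (ekx γ * w2) * ((qi * w1) * c) := by rw [hw2b, hw1a]
          _ = ekx γ * (w2 * qi) * (w1 * c) := by noncomm_ring
          _ = ekx γ * (qi * w2) * (c' * w1) := by rw [hw2qi, hc'c]
          _ = (ekx γ * qi) * ((w2 * c') * w1) := by noncomm_ring
          _ = (ekx γ * qi) * ((ekx θ * w2) * w1) := by rw [hw2c]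
          _ = (ekx γ * qi * ekx θ) * (w2 * w1) := by noncomm_ring
          _ = -ekx (γ + θ) * (w2 * w1) := by rw [ekx_mul_qi_mul]
      rw [mul_neg, key]
      noncomm_ring
  · intro γ θ γ' θ'
    constructor
    · rintro ⟨w, hwn, h1, h2, h3, _⟩
      rw [conj_iff hwn] at h1 h2 h3
      rw [Quaternion.ext_iff] at h1 h2 h3
      obtain ⟨e1, e2, e3, e4⟩ := h1
      obtain ⟨f1, f2, f3, f4⟩ := h2
      obtain ⟨g1, g2, g3, g4⟩ := h3
      simp only [qi_re', qi_imI', qi_imJ', qi_imK', ekx_re', ekx_imI', ekx_imJ', ekx_imK', Quaternion.re_mul, Quaternion.imI_mul, Quaternion.imJ_mul,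
        Quaternion.imK_mul] at e1 e2 e3 e4 f1 f2 f3 f4 g1 g2 g3 g4
      have hz : w.imJ = 0 := by linarith [e4]
      have ht : w.imK = 0 := by linarith [e3]
      rw [hz, ht] at f1 f2 f3 f4 g1 g2 g3 g4
      simp only [mul_zero, zero_mul, add_zero, zero_add, sub_zero, neg_zero, mul_one, one_mul,
        mul_neg, neg_neg, zero_sub, sub_eq_neg_self] at f1 f2 f3 f4 g1 g2 g3 g4
      have hn2 := normSq_of_norm_one hwn
      rw [hz, ht] at hn2
      by_cases hx : w.re = 0
      · have hy : w.imI ≠ 0 := by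
          intro hy; rw [hx, hy] at hn2; norm_num at hn2
        have hcγ : Real.cos γ = Real.cos γ' := mul_left_cancel₀ hy (by linear_combination -f1)
        have hsγ : Real.sin γ' = -Real.sin γ := mul_left_cancel₀ hy (by linear_combination f4)
        have hcθ : Real.cos θ = Real.cos θ' := mul_left_cancel₀ hy (by linear_combination -g1)
        have hsθ : Real.sin θ' = -Real.sin θ := mul_left_cancel₀ hy (by linear_combination g4)
        obtain ⟨m, hm⟩ := angle_neg_eq hcγ hsγ
        obtain ⟨n, hn⟩ := angle_neg_eq hcθ hsθ
        exact ⟨m, n, Or.inr ⟨by linarith, by linarith⟩⟩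
      · have hcγ : Real.cos γ = Real.cos γ' := mul_left_cancel₀ hx (by linear_combination f2)
        have hsγ : Real.sin γ = Real.sin γ' := mul_left_cancel₀ hx (by linear_combination f3)
        have hcθ : Real.cos θ = Real.cos θ' := mul_left_cancel₀ hx (by linear_combination g2)
        have hsθ : Real.sin θ = Real.sin θ' := mul_left_cancel₀ hx (by linear_combination g3)
        obtain ⟨m, hm⟩ := angle_eq hcγ hsγ
        obtain ⟨n, hn⟩ := angle_eq hcθ hsθ
        exact ⟨m, n, Or.inl ⟨by linarith, by linarith⟩⟩
    · rintro ⟨m, n, ⟨hγ, hθ⟩ | ⟨hγ, hθ⟩⟩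
      · refine ⟨1, by simp, by simp, ?_, ?_, ?_⟩
        · simp only [one_mul, inv_one, mul_one]
          rw [hγ, ekx_period]
        · simp only [one_mul, inv_one, mul_one]
          rw [hθ, ekx_period]
        · simp only [one_mul, inv_one, mul_one]
          have h : γ' + θ' = (γ + θ) + 2*((m+n : ℤ) : ℝ)*π := by push_cast; linarith
          rw [h, ekx_period]
      · refine ⟨qi, qi_norm, ?_, ?_, ?_, ?_⟩
        · rw [conj_iff qi_norm]
        · rw [qi_conj_ekx, hγ, ekx_period]
        · rw [qi_conj_ekx, hθ, ekx_period]
        · rw [qi_conj_ekx]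
          have h : γ' + θ' = -(γ + θ) + 2*((m+n : ℤ) : ℝ)*π := by push_cast; linarith
          rw [h, ekx_period]
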